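/- Let (L_t), (D_t) be defined by: L is fixed on blocks of 2^ρ iterations with D_t = L_{t'}/2^ρ whenever t'−1 is a multiple of 2^ρ and D unchanged within a block, and L_{t+1} ≥ L_t + D_t for all t. Then L_{t+2^ρ} ≥ 2·L_t for every t. -/

import Mathlib

/-- Suppose `D_t = L_t/2^ρ` whenever `t − 1` is a multiple of `2^ρ`
and `D_t = D_{t−1}` otherwise, and `L_{t+1} = L_t + D_t` except at block boundaries
(`2^ρ ∣ t`), where `L_{t+1} ≥ L_t + D_t` may jump. Then `L_{t+2^ρ} ≥ 2·L_t` for every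
`t ≥ 1`. -/
theorem L_doubles_every_block (ρ : ℕ) (L D : ℕ → ℝ)
    (hD : ∀ t : ℕ, 1 ≤ t →
      (2 ^ ρ ∣ (t - 1) → D t = L t / 2 ^ ρ) ∧ (¬ 2 ^ ρ ∣ (t - 1) → D t = D (t - 1)))
    (hL : ∀ t : ℕ, 1 ≤ t →
      (2 ^ ρ ∣ t → L t + D t ≤ L (t + 1)) ∧ (¬ 2 ^ ρ ∣ t → L (t + 1) = L t + D t)) :
    ∀ t : ℕ, 1 ≤ t → 2 * L t ≤ L (t + 2 ^ ρ) := by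
  set N := 2 ^ ρ with hN
  have hNpos : 0 < N := Nat.pow_pos (by norm_num)
  have hNr : (0:ℝ) < (N:ℝ) := by exact_mod_cast hNpos
  have hNR : ((N:ℕ):ℝ) = (2:ℝ) ^ ρ := by rw [hN]; push_cast; ring
  -- within a block, D is constant and L grows linearly
  have block : ∀ k i, i < N →
      D (k*N + 1 + i) = D (k*N + 1) ∧
      L (k*N + 1 + i) = L (k*N + 1) + i * D (k*N + 1) := by
    intro k i
    induction i with
    | zero => intro _; simp
    | succ i ih =>
      intro hi
      obtain ⟨hDi, hLi⟩ := ih (by omega)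
      have hnd : ¬ N ∣ (k*N + 1 + i) := by
        intro h
        have h1 : N ∣ (1 + i) := by
          have he : k*N + 1 + i = k*N + (1 + i) := by omega
          rw [he] at h
          exact (Nat.dvd_add_right ⟨k, by ring⟩).mp h
        have := Nat.le_of_dvd (by omega) h1
        omega
      have hstep := (hL (k*N + 1 + i) (by omega)).2 hnd
      have hDstep : D (k*N + 1 + i + 1) = D (k*N + 1 + i) := by
        have h := (hD (k*N + 1 + i + 1) (by omega)).2
        have he : (k*N + 1 + i + 1) - 1 = k*N + 1 + i := by omega
        rw [he] at h
        exact h hnd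
      have hassoc : k*N + 1 + (i + 1) = k*N + 1 + i + 1 := by omega
      rw [hassoc]
      constructor
      · rw [hDstep, hDi]
      · rw [hstep, hLi, hDi]
        push_cast
        ring
  have hDstart : ∀ k, D (k*N + 1) = L (k*N + 1) / N := by
    intro k
    have h := (hD (k*N + 1) (by omega)).1
    have he : (k*N + 1) - 1 = k*N := by omega
    rw [he] at h
    rw [hNR]
    exact h ⟨k, by ring⟩
  -- at a block boundary, L has at least doubled
  have dbl : ∀ k, 2 * L (k*N + 1) ≤ L (k*N + 1 + N) := by
    intro k
    obtain ⟨hDlast, hLlast⟩ := block k (N-1) (by omega)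
    have hDs := hDstart k
    have hdvd : N ∣ (k*N + 1 + (N-1)) := by
      have he1 : k*N + 1 + (N-1) = k*N + N := by omega
      have he2 : k*N + N = (k+1)*N := by ring
      rw [he1, he2]
      exact ⟨k+1, by ring⟩
    have hstep := (hL (k*N + 1 + (N-1)) (by omega)).1 hdvd
    have he2 : k*N + 1 + (N-1) + 1 = k*N + 1 + N := by omega
    rw [he2, hLlast, hDlast, hDs] at hstep
    have hcast : ((N-1 : ℕ) : ℝ) = (N:ℝ) - 1 := by
      rw [Nat.cast_sub hNpos, Nat.cast_one]
    rw [hcast] at hstep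
    have heq : L (k*N+1) + ((N:ℝ) - 1) * (L (k*N+1) / N) + L (k*N+1) / N
        = 2 * L (k*N+1) := by
      field_simp
      ring
    linarith [hstep, heq.symm.le]
  -- main statement
  intro t ht
  set k := (t - 1) / N with hk
  set i := (t - 1) % N with hi
  have hiN : i < N := Nat.mod_lt _ hNpos
  have hdm : k * N + i = t - 1 := by
    rw [hk, hi, Nat.mul_comm]
    exact Nat.div_add_mod (t-1) N
  have hteq : t = k*N + 1 + i := by omega
  have hmul : (k+1)*N = k*N + N := by ring
  obtain ⟨hD1, hL1⟩ := block k i hiN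
  obtain ⟨hD2, hL2⟩ := block (k+1) i hiN
  have hDs := hDstart k
  have hDs' := hDstart (k+1)
  have hdblk : 2 * L (k*N + 1) ≤ L ((k+1)*N + 1) := by
    have h := dbl k
    have he : k*N + 1 + N = (k+1)*N + 1 := by omega
    rwa [he] at h
  have hfin : k*N + 1 + i + N = (k+1)*N + 1 + i := by omega
  rw [hteq, hfin, hL1, hL2, hDs, hDs']
  have hinn : (0:ℝ) ≤ (i:ℝ) / N := div_nonneg (by positivity) hNr.le
  have key := mul_le_mul_of_nonneg_right hdblk hinn
  have e1 : (i:ℝ) * (L (k*N+1) / N) = L (k*N+1) * ((i:ℝ)/N) := by ring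
  have e2 : (i:ℝ) * (L ((k+1)*N+1) / N) = L ((k+1)*N+1) * ((i:ℝ)/N) := by ring
  rw [e1, e2]
  nlinarith [key, hdblk]
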